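/- For every finite simple graph G, |λ(G) − λ(Ḡ)| ≤ 1, where λ denotes the location-domination number and Ḡ the complement graph. -/
import Mathlib


open SimpleGraph

/-- `S` is a dominating set of `G`: every vertex outside `S` has a neighbor in `S`. -/
def isDomSet {α : Type*} (G : SimpleGraph α) (S : Set α) : Prop :=
  ∀ v ∉ S, ∃ u ∈ S, G.Adj v u

/-- `S` is a locating-dominating set (LD-set) of `G`. -/
def isLDSet {α : Type*} (G : SimpleGraph α) (S : Set α) : Prop :=
  isDomSet G S ∧ ∀ u ∉ S, ∀ v ∉ S, u ≠ v →
    G.neighborSet u ∩ S ≠ G.neighborSet v ∩ S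

/-- The location-domination number `λ(G)`. -/
noncomputable def ldNum {α : Type*} (G : SimpleGraph α) : ℕ :=
  sInf {n | ∃ S : Set α, isLDSet G S ∧ S.ncard = n}

/-- The global location-domination number `λ_g(G)`. -/
noncomputable def gldNum {α : Type*} (G : SimpleGraph α) : ℕ :=
  sInf {n | ∃ S : Set α, isLDSet G S ∧ isLDSet Gᶜ S ∧ S.ncard = n}

/-- `G` is bipartite with stable sets `U` and `W`. -/
def bipartiteWith {α : Type*} (G : SimpleGraph α) (U W : Set α) : Prop :=
  U ∪ W = Set.univ ∧ Disjoint U W ∧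
    ∀ ⦃u v : α⦄, G.Adj u v → (u ∈ U ∧ v ∈ W) ∨ (u ∈ W ∧ v ∈ U)

lemma univ_LD {V : Type*} (G : SimpleGraph V) : isLDSet G Set.univ := by
  constructor
  · intro v hv; exact absurd (Set.mem_univ v) hv
  · intro u hu; exact absurd (Set.mem_univ u) hu

/-- If `S` is an LD-set of `G`, then the locating condition holds for `S` in `Gᶜ`. -/
lemma locate_compl {V : Type*} (G : SimpleGraph V) {S : Set V} (hS : isLDSet G S) :
    ∀ u ∉ S, ∀ v ∉ S, u ≠ v →
      Gᶜ.neighborSet u ∩ S ≠ Gᶜ.neighborSet v ∩ S := by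
  intro u hu v hv huv h
  apply hS.2 u hu v hv huv
  ext x
  simp only [Set.mem_inter_iff, mem_neighborSet]
  by_cases hxS : x ∈ S
  · have h3 : Gᶜ.Adj u x ↔ Gᶜ.Adj v x := by
      have := Set.ext_iff.mp h x
      simpa [hxS] using this
    have h1 : Gᶜ.Adj u x ↔ ¬ G.Adj u x :=
      ⟨fun a => a.2, fun a => ⟨fun e => hu (e ▸ hxS), a⟩⟩
    have h2 : Gᶜ.Adj v x ↔ ¬ G.Adj v x :=
      ⟨fun a => a.2, fun a => ⟨fun e => hv (e ▸ hxS), a⟩⟩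
    constructor
    · rintro ⟨hx, -⟩
      refine ⟨?_, hxS⟩
      by_contra hc
      exact (h1.mp (h3.mpr (h2.mpr hc))) hx
    · rintro ⟨hx, -⟩
      refine ⟨?_, hxS⟩
      by_contra hc
      exact (h2.mp (h3.mp (h1.mpr hc))) hx
  · simp [hxS]

lemma ldNum_compl_le {V : Type*} [Fintype V] (G : SimpleGraph V) :
    ldNum Gᶜ ≤ ldNum G + 1 := by
  classical
  have hne : (ldNum G) ∈ {n | ∃ S : Set V, isLDSet G S ∧ S.ncard = n} := by
    apply Nat.sInf_mem
    exact ⟨(Set.univ : Set V).ncard, Set.univ, univ_LD G, rfl⟩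
  obtain ⟨S, hS, hcard⟩ := hne
  by_cases hw : ∃ w ∉ S, S ⊆ G.neighborSet w
  · obtain ⟨w, hwS, hwall⟩ := hw
    have hLD : isLDSet Gᶜ (insert w S) := by
      constructor
      · intro v hv
        have hvS : v ∉ S := fun h => hv (Set.mem_insert_of_mem w h)
        have hvw : v ≠ w := fun h => hv (h ▸ Set.mem_insert w S)
        -- v is not adjacent in G to all of S (else neighborhoods of v and w agree on S)
        by_contra hno
        push_neg at hno
        have hvall : S ⊆ G.neighborSet v := by
          intro x hxS
          by_contra hgx
          exact hno x (Set.mem_insert_of_mem w hxS)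
            ⟨fun e => hvS (e ▸ hxS), hgx⟩
        apply hS.2 v hvS w hwS hvw
        ext x
        simp only [Set.mem_inter_iff, mem_neighborSet]
        exact ⟨fun ⟨_, hx⟩ => ⟨hwall hx, hx⟩, fun ⟨_, hx⟩ => ⟨hvall hx, hx⟩⟩
      · intro u hu v hv huv h
        have huS : u ∉ S := fun h => hu (Set.mem_insert_of_mem w h)
        have hvS : v ∉ S := fun h => hv (Set.mem_insert_of_mem w h)
        apply locate_compl G hS u huS v hvS huv
        ext x
        simp only [Set.mem_inter_iff, mem_neighborSet]
        constructor
        · rintro ⟨hx, hxS⟩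
          have := Set.ext_iff.mp h x
          simp only [Set.mem_inter_iff, mem_neighborSet, Set.mem_insert_iff] at this
          exact ⟨(this.mp ⟨hx, Or.inr hxS⟩).1, hxS⟩
        · rintro ⟨hx, hxS⟩
          have := Set.ext_iff.mp h x
          simp only [Set.mem_inter_iff, mem_neighborSet, Set.mem_insert_iff] at this
          exact ⟨(this.mpr ⟨hx, Or.inr hxS⟩).1, hxS⟩
    calc ldNum Gᶜ ≤ (insert w S).ncard :=
          Nat.sInf_le ⟨insert w S, hLD, rfl⟩
      _ ≤ S.ncard + 1 := Set.ncard_insert_le w S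
      _ = ldNum G + 1 := by rw [hcard]
  · push_neg at hw
    have hLD : isLDSet Gᶜ S := by
      refine ⟨?_, locate_compl G hS⟩
      intro v hv
      obtain ⟨x, hxS, hgx⟩ := Set.not_subset.mp (hw v hv)
      exact ⟨x, hxS, ⟨fun e => hv (e ▸ hxS), fun a => hgx a⟩⟩
    calc ldNum Gᶜ ≤ S.ncard := Nat.sInf_le ⟨S, hLD, rfl⟩
      _ ≤ ldNum G + 1 := by omega

theorem stmt3 {V : Type*} [Fintype V] (G : SimpleGraph V) :
    |(ldNum G : ℤ) - (ldNum Gᶜ : ℤ)| ≤ 1 := by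
  have h1 := ldNum_compl_le G
  have h2 := ldNum_compl_le Gᶜ
  rw [compl_compl] at h2
  rw [abs_sub_le_iff]
  constructor <;> omega
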